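/- arXiv:2201.05260 — 3 statements merged into one kernel-verified Lean document; each statement's English description precedes it below -/
import Mathlib

section
/- Let 1 ≤ p ≤ q and 0 ≤ a ≤ p, and set N = p + q. In ℤ^N, define S to be the set of vectors e_i − e_j with 1 ≤ i ≤ a and p+q−a+1 ≤ j ≤ p+q, together with the vectors −e_i + e_j with a+1 ≤ i ≤ p and p+1 ≤ j ≤ p+q−a. Let w be the linear map induced by the permutation of {1,…,p+q} sending i ↦ p+1−i for i ≤ p and i ↦ 2p+q+1−i for i > p. Then w(S) ∩ S = ∅ if and only if p ≤ 2a and 2a ≤ q. -/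
/-- combinatorial core of Theorem 3.4 (type AIII).
Indices are 0-based in `Fin (p+q)` (0-based `k` stands for 1-based `k+1`).
`σ` is the permutation reversing the first `p` indices among themselves and the last
`q` indices among themselves; `w` is the induced linear map (note `σ` is an involution). -/
theorem stmt_2 (p q a : ℕ) (hp : 1 ≤ p) (hpq : p ≤ q) (ha : a ≤ p)
    (e : Fin (p + q) → Fin (p + q) → ℤ)
    (he : ∀ i k, e i k = if k = i then 1 else 0)
    (S : Set (Fin (p + q) → ℤ))
    (hS : S = {v | ∃ i j : Fin (p + q), (i : ℕ) < a ∧ p + q - a ≤ (j : ℕ) ∧ v = e i - e j} ∪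
              {v | ∃ i j : Fin (p + q), a ≤ (i : ℕ) ∧ (i : ℕ) < p ∧
                    p ≤ (j : ℕ) ∧ (j : ℕ) < p + q - a ∧ v = -(e i) + e j})
    (σ : Fin (p + q) → Fin (p + q))
    (hσ : ∀ k, (σ k : ℕ) = if (k : ℕ) < p then p - 1 - (k : ℕ) else 2 * p + q - 1 - (k : ℕ))
    (w : (Fin (p + q) → ℤ) → (Fin (p + q) → ℤ))
    (hw : ∀ v k, w v k = v (σ k)) :
    (w '' S) ∩ S = ∅ ↔ (p ≤ 2 * a ∧ 2 * a ≤ q) := by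
  subst hS
  have hinv : ∀ k, σ (σ k) = k := by
    intro k
    have hk := k.isLt
    have h1 := hσ k
    have h2 := hσ (σ k)
    apply Fin.ext
    split_ifs at h1 h2 <;> omega
  have hiff : ∀ k m, σ k = m ↔ k = σ m := by
    intro k m
    constructor
    · rintro rfl; exact (hinv k).symm
    · rintro rfl; exact hinv m
  have hwe1 : ∀ i j : Fin (p + q), w (e i - e j) = e (σ i) - e (σ j) := by
    intro i j
    funext k
    rw [hw]
    simp only [Pi.sub_apply, he, hiff]
  have hwe2 : ∀ i j : Fin (p + q), w (-(e i) + e j) = -(e (σ i)) + e (σ j) := by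
    intro i j
    funext k
    rw [hw]
    simp only [Pi.add_apply, Pi.neg_apply, he, hiff]
  constructor
  · intro hemp
    by_contra hc
    rw [not_and_or] at hc
    rcases hc with hc | hc
    · -- ¬ (p ≤ 2a), i.e. 2a < p
      push_neg at hc
      have ha1 : a < p + q := by omega
      have ha2 : p + a < p + q := by omega
      set i0 : Fin (p + q) := ⟨a, ha1⟩ with hi0
      set j0 : Fin (p + q) := ⟨p + a, ha2⟩ with hj0
      have hv0 : (i0 : ℕ) = a := rfl
      have hv1 : (j0 : ℕ) = p + a := rfl
      have hs0 : ((σ i0) : ℕ) = p - 1 - a := by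
        rw [hσ, hv0, if_pos (by omega : a < p)]
      have hs1 : ((σ j0) : ℕ) = p + q - 1 - a := by
        rw [hσ, hv1, if_neg (by omega : ¬ p + a < p)]
        omega
      have hu : (-(e i0) + e j0) ∈
          ({v | ∃ i j : Fin (p + q), (i : ℕ) < a ∧ p + q - a ≤ (j : ℕ) ∧ v = e i - e j} ∪
           {v | ∃ i j : Fin (p + q), a ≤ (i : ℕ) ∧ (i : ℕ) < p ∧
                 p ≤ (j : ℕ) ∧ (j : ℕ) < p + q - a ∧ v = -(e i) + e j}) :=
        Or.inr ⟨i0, j0, by omega, by omega, by omega, by omega, rfl⟩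
      have hwu : w (-(e i0) + e j0) ∈
          ({v | ∃ i j : Fin (p + q), (i : ℕ) < a ∧ p + q - a ≤ (j : ℕ) ∧ v = e i - e j} ∪
           {v | ∃ i j : Fin (p + q), a ≤ (i : ℕ) ∧ (i : ℕ) < p ∧
                 p ≤ (j : ℕ) ∧ (j : ℕ) < p + q - a ∧ v = -(e i) + e j}) :=
        Or.inr ⟨σ i0, σ j0, by omega, by omega, by omega, by omega, hwe2 i0 j0⟩
      exact Set.eq_empty_iff_forall_notMem.mp hemp _ ⟨⟨_, hu, rfl⟩, hwu⟩
    · -- ¬ (2a ≤ q), i.e. q < 2a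
      push_neg at hc
      have ha1 : a - 1 < p + q := by omega
      have ha2 : p + q - a < p + q := by omega
      set i0 : Fin (p + q) := ⟨a - 1, ha1⟩ with hi0
      set j0 : Fin (p + q) := ⟨p + q - a, ha2⟩ with hj0
      have hv0 : (i0 : ℕ) = a - 1 := rfl
      have hv1 : (j0 : ℕ) = p + q - a := rfl
      have hs0 : ((σ i0) : ℕ) = p - a := by
        rw [hσ, hv0, if_pos (by omega : a - 1 < p)]
        omega
      have hs1 : ((σ j0) : ℕ) = p + a - 1 := by
        rw [hσ, hv1, if_neg (by omega : ¬ p + q - a < p)]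
        omega
      have hu : (e i0 - e j0) ∈
          ({v | ∃ i j : Fin (p + q), (i : ℕ) < a ∧ p + q - a ≤ (j : ℕ) ∧ v = e i - e j} ∪
           {v | ∃ i j : Fin (p + q), a ≤ (i : ℕ) ∧ (i : ℕ) < p ∧
                 p ≤ (j : ℕ) ∧ (j : ℕ) < p + q - a ∧ v = -(e i) + e j}) :=
        Or.inl ⟨i0, j0, by omega, by omega, rfl⟩
      have hwu : w (e i0 - e j0) ∈
          ({v | ∃ i j : Fin (p + q), (i : ℕ) < a ∧ p + q - a ≤ (j : ℕ) ∧ v = e i - e j} ∪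
           {v | ∃ i j : Fin (p + q), a ≤ (i : ℕ) ∧ (i : ℕ) < p ∧
                 p ≤ (j : ℕ) ∧ (j : ℕ) < p + q - a ∧ v = -(e i) + e j}) :=
        Or.inl ⟨σ i0, σ j0, by omega, by omega, hwe1 i0 j0⟩
      exact Set.eq_empty_iff_forall_notMem.mp hemp _ ⟨⟨_, hu, rfl⟩, hwu⟩
  · rintro ⟨hA, hB⟩
    apply Set.eq_empty_iff_forall_notMem.mpr
    rintro v ⟨⟨u, hu, huv⟩, hv⟩
    rcases hv with ⟨i', j', hi', hj', rfl⟩ | ⟨i', j', ha', hb', hc', hd', rfl⟩ <;>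
      rcases hu with ⟨i, j, hi, hj, rfl⟩ | ⟨i, j, hi1, hi2, hj1, hj2, rfl⟩
    · -- u ∈ S1, v ∈ S1 : evaluate at j'
      rw [hwe1 i j] at huv
      have hsi := hσ i
      have hsj := hσ j
      have hki := i.isLt
      have hkj := j.isLt
      have hki' := i'.isLt
      have hkj' := j'.isLt
      have h6 := congrFun huv j'
      simp only [Pi.sub_apply, he, Fin.ext_iff] at h6
      split_ifs at hsi hsj h6 <;> omega
    · -- u ∈ S2, v ∈ S1 : evaluate at i'
      rw [hwe2 i j] at huv
      have hsi := hσ i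
      have hsj := hσ j
      have hki := i.isLt
      have hkj := j.isLt
      have hki' := i'.isLt
      have hkj' := j'.isLt
      have h6 := congrFun huv i'
      simp only [Pi.sub_apply, Pi.add_apply, Pi.neg_apply, he, Fin.ext_iff] at h6
      split_ifs at hsi hsj h6 <;> omega
    · -- u ∈ S1, v ∈ S2 : evaluate at i'
      rw [hwe1 i j] at huv
      have hsi := hσ i
      have hsj := hσ j
      have hki := i.isLt
      have hkj := j.isLt
      have hki' := i'.isLt
      have hkj' := j'.isLt
      have h6 := congrFun huv i'
      simp only [Pi.sub_apply, Pi.add_apply, Pi.neg_apply, he, Fin.ext_iff] at h6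
      split_ifs at hsi hsj h6 <;> omega
    · -- u ∈ S2, v ∈ S2 : evaluate at i'
      rw [hwe2 i j] at huv
      have hsi := hσ i
      have hsj := hσ j
      have hki := i.isLt
      have hkj := j.isLt
      have hki' := i'.isLt
      have hkj' := j'.isLt
      have h6 := congrFun huv i'
      simp only [Pi.add_apply, Pi.neg_apply, he, Fin.ext_iff] at h6
      split_ifs at hsi hsj h6 <;> omega
end

section
/- Let 1 ≤ p ≤ q, 0 ≤ a ≤ p with p ≤ 2a ≤ q, and N = p+q. Define S' ⊂ ℤ^N as the union of: (i) the vectors e_i − e_j with 1 ≤ i ≤ a and p+q−a+1 ≤ j ≤ p+q; (ii) the vectors −e_i + e_j with a+1 ≤ i ≤ p and p+1 ≤ j ≤ p+q−a; and (iii) the vectors e_i − e_j with a+1 ≤ i ≤ p and p+q−a+1 ≤ j ≤ p+q. Let w be the permutation-induced linear map sending i ↦ p+1−i for i ≤ p and i ↦ 2p+q+1−i for i > p. Then w(S') ∩ S' = ∅. -/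
lemma unit_eq {N : ℕ} (e : Fin N → Fin N → ℤ) (he : ∀ i k, e i k = if k = i then 1 else 0)
    (i j i' j' : Fin N) (hij : i ≠ j) (hij' : i' ≠ j')
    (h : e i - e j = e i' - e j') : i = i' ∧ j = j' := by
  have h1 := congrFun h i
  have h2 := congrFun h j
  simp only [Pi.sub_apply, he] at h1 h2
  constructor
  · rcases eq_or_ne i i' with h' | h'
    · exact h'
    · exfalso; split_ifs at h1 <;> omega
  · rcases eq_or_ne j j' with h' | h'
    · exact h'
    · exfalso; split_ifs at h2 <;> omega

/-- Proposition 3.5, domain `D_s` (type AIII). `S'` is the union of the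
three families (i),(ii),(iii), and `w` is the induced map of the permutation reversing
the first `p` and the last `q` indices among themselves (0-based indexing). -/
theorem stmt_3 (p q a : ℕ) (hp : 1 ≤ p) (hpq : p ≤ q) (ha : a ≤ p)
    (h1 : p ≤ 2 * a) (h2 : 2 * a ≤ q)
    (e : Fin (p + q) → Fin (p + q) → ℤ)
    (he : ∀ i k, e i k = if k = i then 1 else 0)
    (S' : Set (Fin (p + q) → ℤ))
    (hS' : S' =
        {v | ∃ i j : Fin (p + q), (i : ℕ) < a ∧ p + q - a ≤ (j : ℕ) ∧ v = e i - e j} ∪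
        {v | ∃ i j : Fin (p + q), a ≤ (i : ℕ) ∧ (i : ℕ) < p ∧
              p ≤ (j : ℕ) ∧ (j : ℕ) < p + q - a ∧ v = -(e i) + e j} ∪
        {v | ∃ i j : Fin (p + q), a ≤ (i : ℕ) ∧ (i : ℕ) < p ∧
              p + q - a ≤ (j : ℕ) ∧ v = e i - e j})
    (σ : Fin (p + q) → Fin (p + q))
    (hσ : ∀ k, (σ k : ℕ) = if (k : ℕ) < p then p - 1 - (k : ℕ) else 2 * p + q - 1 - (k : ℕ))
    (w : (Fin (p + q) → ℤ) → (Fin (p + q) → ℤ))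
    (hw : ∀ v k, w v k = v (σ k)) :
    (w '' S') ∩ S' = ∅ := by
  -- σ is an involution
  have hσσ : ∀ k, σ (σ k) = k := by
    intro k
    apply Fin.ext
    have hk := hσ k
    have hk2 := hσ (σ k)
    have := k.isLt
    have := (σ k).isLt
    split_ifs at hk hk2 <;> omega
  have hσiff : ∀ m n : Fin (p + q), σ m = n ↔ m = σ n := by
    intro m n
    constructor
    · rintro rfl; exact (hσσ m).symm
    · rintro rfl; exact hσσ n
  -- normalized membership
  have hmem : ∀ u ∈ S', ∃ i j : Fin (p + q),
      (((i : ℕ) < a ∧ p + q - a ≤ (j : ℕ)) ∨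
       (p ≤ (i : ℕ) ∧ (i : ℕ) < p + q - a ∧ a ≤ (j : ℕ) ∧ (j : ℕ) < p) ∨
       (a ≤ (i : ℕ) ∧ (i : ℕ) < p ∧ p + q - a ≤ (j : ℕ))) ∧ u = e i - e j := by
    intro u hu
    rw [hS'] at hu
    rcases hu with (⟨i, j, hi, hj, hv⟩ | ⟨i, j, hi1, hi2, hj1, hj2, hv⟩) | ⟨i, j, hi1, hi2, hj, hv⟩
    · exact ⟨i, j, Or.inl ⟨hi, hj⟩, hv⟩
    · exact ⟨j, i, Or.inr (Or.inl ⟨hj1, hj2, hi1, hi2⟩), by rw [hv]; abel⟩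
    · exact ⟨i, j, Or.inr (Or.inr ⟨hi1, hi2, hj⟩), hv⟩
  rw [Set.eq_empty_iff_forall_notMem]
  rintro x ⟨⟨v, hvS, rfl⟩, hxS⟩
  obtain ⟨i, j, hR, rfl⟩ := hmem v hvS
  obtain ⟨i', j', hR', hx⟩ := hmem _ hxS
  -- w (e i - e j) = e (σ i) - e (σ j)
  have hwv : w (e i - e j) = e (σ i) - e (σ j) := by
    funext k
    rw [hw]
    simp only [Pi.sub_apply, he]
    simp only [hσiff]
  have heq : e (σ i) - e (σ j) = e i' - e j' := by rw [← hwv, hx]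
  -- inequalities on indices
  have hii := i.isLt
  have hjj := j.isLt
  have hii' := i'.isLt
  have hjj' := j'.isLt
  have hij : i ≠ j := by
    intro h; apply congrArg Fin.val at h; omega
  have hij' : i' ≠ j' := by
    intro h; apply congrArg Fin.val at h; omega
  have hσij : σ i ≠ σ j := by
    intro h; apply hij; rw [← hσσ i, h, hσσ]
  obtain ⟨hi', hj'⟩ := unit_eq e he _ _ _ _ hσij hij' heq
  have e1 : (i' : ℕ) = if (i : ℕ) < p then p - 1 - (i : ℕ) else 2 * p + q - 1 - (i : ℕ) := by
    rw [← hi']; exact hσ i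
  have e2 : (j' : ℕ) = if (j : ℕ) < p then p - 1 - (j : ℕ) else 2 * p + q - 1 - (j : ℕ) := by
    rw [← hj']; exact hσ j
  split_ifs at e1 e2 <;> omega
end

section
/- Let n ≥ 1 and 0 ≤ a ≤ n, and let w be the index-reversal permutation i ↦ n+1−i of {1,…,n}, acting linearly on ℤⁿ. Let S⁺ = {e_i + e_j : 1 ≤ i ≤ j ≤ a} and S⁻ = {−e_i − e_j : a+1 ≤ i ≤ j ≤ n}. Then: (i) w(S⁺) ∩ S⁺ = ∅ if and only if 2a ≤ n; (ii) w(S⁻) ∩ S⁻ = ∅ if and only if 2a ≥ n; (iii) w(S⁺) ∩ S⁻ = ∅ and w(S⁻) ∩ S⁺ = ∅ always. -/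
/-- refined combinatorial core of Theorem 3.2 for `Sp(2n,ℝ)`.
`Sp = S⁺`, `Sm = S⁻`, and `w` is induced by the index reversal. -/
theorem stmt_13 (n a : ℕ) (hn : 1 ≤ n) (ha : a ≤ n)
    (e : Fin n → Fin n → ℤ)
    (he : ∀ i k, e i k = if k = i then 1 else 0)
    (Sp Sm : Set (Fin n → ℤ))
    (hSp : Sp = {v | ∃ i j : Fin n, i ≤ j ∧ (j : ℕ) < a ∧ v = e i + e j})
    (hSm : Sm = {v | ∃ i j : Fin n, a ≤ (i : ℕ) ∧ i ≤ j ∧ v = -(e i) - e j})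
    (w : (Fin n → ℤ) → (Fin n → ℤ))
    (hw : ∀ v k, w v k = v k.rev) :
    ((w '' Sp) ∩ Sp = ∅ ↔ 2 * a ≤ n) ∧
    ((w '' Sm) ∩ Sm = ∅ ↔ n ≤ 2 * a) ∧
    ((w '' Sp) ∩ Sm = ∅ ∧ (w '' Sm) ∩ Sp = ∅) := by
  subst hSp hSm
  have hval : ∀ (i j k : Fin n),
      (e i + e j) k = (if k = i then (1:ℤ) else 0) + (if k = j then 1 else 0) := by
    intro i j k; simp [he]
  have hvalm : ∀ (i j k : Fin n),
      (-(e i) - e j) k = -(if k = i then (1:ℤ) else 0) - (if k = j then 1 else 0) := by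
    intro i j k; simp [he]
  have hrev : ∀ (k x : Fin n), k.rev = x ↔ k = x.rev := by
    intro k x
    constructor
    · rintro rfl; rw [Fin.rev_rev]
    · rintro rfl; rw [Fin.rev_rev]
  refine ⟨⟨?_, ?_⟩, ⟨?_, ?_⟩, ?_, ?_⟩
  · -- (w '' Sp) ∩ Sp = ∅ → 2a ≤ n
    intro hemp
    by_contra hlt
    push_neg at hlt
    have ha1 : 1 ≤ a := by omega
    set x : Fin n := ⟨a - 1, by omega⟩ with hx
    have hvS : (e x + e x) ∈ {v | ∃ i j : Fin n, i ≤ j ∧ (j : ℕ) < a ∧ v = e i + e j} :=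
      ⟨x, x, le_refl _, by simp [hx]; omega, rfl⟩
    have hwv : w (e x + e x) = e x.rev + e x.rev := by
      funext k
      rw [hw, hval, hval]; simp only [hrev]
    refine Set.eq_empty_iff_forall_notMem.mp hemp (w (e x + e x))
      ⟨⟨_, hvS, rfl⟩, x.rev, x.rev, le_refl _, ?_, hwv⟩
    rw [Fin.val_rev]; simp [hx]; omega
  · -- 2a ≤ n → empty
    intro hle
    rw [Set.eq_empty_iff_forall_notMem]
    rintro v ⟨⟨u, ⟨i, j, hij, hj, rfl⟩, rfl⟩, ⟨i', j', hij', hj', heq⟩⟩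
    have h1 := congrFun heq i.rev
    rw [hw, Fin.rev_rev, hval, hval] at h1
    have hi : (i : ℕ) < a := lt_of_le_of_lt (Fin.le_def.mp hij) hj
    have hi' : (i' : ℕ) < a := lt_of_le_of_lt (Fin.le_def.mp hij') hj'
    have hra : (i.rev : ℕ) < a := by
      by_cases hc1 : i.rev = i'
      · rw [hc1]; exact hi'
      · by_cases hc2 : i.rev = j'
        · rw [hc2]; exact hj'
        · simp [hc1, hc2] at h1
          split_ifs at h1 <;> omega
    rw [Fin.val_rev] at hra
    omega
  · -- (w '' Sm) ∩ Sm = ∅ → n ≤ 2a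
    intro hemp
    by_contra hlt
    push_neg at hlt
    set x : Fin n := ⟨a, by omega⟩ with hx
    have hvS : (-(e x) - e x) ∈ {v | ∃ i j : Fin n, a ≤ (i:ℕ) ∧ i ≤ j ∧ v = -(e i) - e j} :=
      ⟨x, x, le_refl _, le_refl _, rfl⟩
    have hwv : w (-(e x) - e x) = -(e x.rev) - e x.rev := by
      funext k
      rw [hw, hvalm, hvalm]; simp only [hrev]
    refine Set.eq_empty_iff_forall_notMem.mp hemp (w (-(e x) - e x))
      ⟨⟨_, hvS, rfl⟩, x.rev, x.rev, ?_, le_refl _, hwv⟩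
    rw [Fin.val_rev]; simp [hx]; omega
  · -- n ≤ 2a → empty
    intro hle
    rw [Set.eq_empty_iff_forall_notMem]
    rintro v ⟨⟨u, ⟨i, j, hi, hij, rfl⟩, rfl⟩, ⟨i', j', hi', hij', heq⟩⟩
    have h1 := congrFun heq j.rev
    rw [hw, Fin.rev_rev, hvalm, hvalm] at h1
    have hj : a ≤ (j : ℕ) := le_trans hi (Fin.le_def.mp hij)
    have hj' : a ≤ (j' : ℕ) := le_trans hi' (Fin.le_def.mp hij')
    have hra : a ≤ (j.rev : ℕ) := by
      by_cases hc1 : j.rev = i'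
      · rw [hc1]; exact hi'
      · by_cases hc2 : j.rev = j'
        · rw [hc2]; exact hj'
        · simp [hc1, hc2] at h1
          split_ifs at h1 <;> omega
    rw [Fin.val_rev] at hra
    have := j.isLt
    omega
  · -- (w '' Sp) ∩ Sm = ∅
    rw [Set.eq_empty_iff_forall_notMem]
    rintro v ⟨⟨u, ⟨i, j, hij, hj, rfl⟩, rfl⟩, ⟨i', j', hi', hij', heq⟩⟩
    have h1 := congrFun heq i.rev
    rw [hw, Fin.rev_rev, hval, hvalm] at h1
    split_ifs at h1 <;> omega
  · -- (w '' Sm) ∩ Sp = ∅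
    rw [Set.eq_empty_iff_forall_notMem]
    rintro v ⟨⟨u, ⟨i, j, hi, hij, rfl⟩, rfl⟩, ⟨i', j', hij', hj', heq⟩⟩
    have h1 := congrFun heq i.rev
    rw [hw, Fin.rev_rev, hvalm, hval] at h1
    split_ifs at h1 <;> omega
end
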